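/- Let K be an algebraically closed field of characteristic 0 and let g, h be monomials in K[x_1,...,x_k] with disjoint supports, at least one of which is non-constant. Then the polynomial g^d + h^d has no repeated irreducible factors in K[x_1,...,x_k]. -/

import Mathlib

open MvPolynomial Finsupp

/-- Each variable `X i` is prime in a multivariate polynomial ring over a field. -/
lemma aux_mv_prime_X {K : Type*} [Field K] {k : ℕ} (i : Fin k) :
    Prime (X i : MvPolynomial (Fin k) K) := by
  cases k with
  | zero => exact i.elim0
  | succ m =>
    let e := ((renameEquiv K (Equiv.swap i 0)).trans (MvPolynomial.finSuccEquiv K m)).toMulEquiv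
    rw [← MulEquiv.prime_iff e]
    have he : e (X i) = Polynomial.X := by
      show (MvPolynomial.finSuccEquiv K m) ((renameEquiv K (Equiv.swap i 0)) (X i)) = _
      rw [renameEquiv_apply, rename_X, Equiv.swap_apply_left, finSuccEquiv_X_zero]
    rw [he]
    exact Polynomial.prime_X

/-- Monomials with disjoint supports are relatively prime. -/
lemma aux_relprime_mon {K : Type*} [Field K] {k : ℕ} (s t : Fin k →₀ ℕ) (a b : K)
    (ha : a ≠ 0) (hb : b ≠ 0) (hdisj : ∀ i, s i = 0 ∨ t i = 0) :
    IsRelPrime (monomial s a : MvPolynomial (Fin k) K) (monomial t b) := by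
  rw [monomial_eq, monomial_eq,
    isRelPrime_mul_unit_left_left ((isUnit_iff_ne_zero.mpr ha).map (C : K →+* _)),
    isRelPrime_mul_unit_left_right ((isUnit_iff_ne_zero.mpr hb).map (C : K →+* _))]
  unfold Finsupp.prod
  apply IsRelPrime.prod_left
  intro i hi
  apply IsRelPrime.prod_right
  intro j hj
  apply IsRelPrime.pow_left
  apply IsRelPrime.pow_right
  refine ((aux_mv_prime_X i).irreducible.isRelPrime_iff_not_dvd).mpr ?_
  rw [X_dvd_X]
  rintro rfl
  rcases hdisj i with h | h
  · exact (Finsupp.mem_support_iff.mp hi) h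
  · exact (Finsupp.mem_support_iff.mp hj) h

/-- The key case: `d ≠ 0` and the first monomial is non-constant. -/
lemma aux_key_sf {K : Type*} [Field K] [CharZero K] {k : ℕ} (s t : Fin k →₀ ℕ) (a b : K)
    (ha : a ≠ 0) (hb : b ≠ 0) (hdisj : ∀ i, s i = 0 ∨ t i = 0)
    (i : Fin k) (hi : s i ≠ 0) (d : ℕ) (hd : d ≠ 0) :
    Squarefree ((monomial s a : MvPolynomial (Fin k) K) ^ d + (monomial t b) ^ d) := by
  intro p hp
  set M : MvPolynomial (Fin k) K := monomial s a with hM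
  set N : MvPolynomial (Fin k) K := monomial t b with hN
  have hti : t i = 0 := (hdisj i).resolve_left hi
  have hpf : p ∣ M ^ d + N ^ d := (dvd_mul_left p p).trans hp
  have hpd : p ∣ pderiv i (M ^ d + N ^ d) := by
    obtain ⟨q, hq⟩ := hp
    rw [hq, mul_assoc, pderiv_mul]
    exact dvd_add ((dvd_mul_right p q).mul_left _) (dvd_mul_right p _)
  have hMd : M ^ d = monomial (d • s) (a ^ d) := monomial_pow
  have hNd : N ^ d = monomial (d • t) (b ^ d) := monomial_pow
  have e1 : (X i : MvPolynomial (Fin k) K) * pderiv i (M ^ d + N ^ d)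
      = C ((d * s i : ℕ) : K) * M ^ d := by
    rw [map_add, hMd, hNd, pderiv_monomial, pderiv_monomial]
    have h1 : ((d • t) i : ℕ) = 0 := by simp [hti]
    have h2 : ((d • s) i : ℕ) = d * s i := by simp
    rw [h1, h2]
    have hle : Finsupp.single i 1 ≤ d • s := by
      rw [Finsupp.single_le_iff]
      exact Nat.one_le_iff_ne_zero.mpr (by simpa using mul_ne_zero hd hi)
    have hX' : (X i : MvPolynomial (Fin k) K) = monomial (Finsupp.single i 1) 1 := by
      rw [← X_pow_eq_monomial, pow_one]
    rw [hX', mul_add, monomial_mul, monomial_mul, C_mul_monomial]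
    rw [add_tsub_cancel_of_le hle]
    push_cast
    ring_nf
    simp
  have hc : ((d * s i : ℕ) : K) ≠ 0 := Nat.cast_ne_zero.mpr (mul_ne_zero hd hi)
  have h2 : p ∣ C ((d * s i : ℕ) : K) * M ^ d := e1 ▸ hpd.mul_left (X i)
  have hMdvd : p ∣ M ^ d := by
    have e2 : M ^ d = C ((d * s i : ℕ) : K)⁻¹ * (C ((d * s i : ℕ) : K) * M ^ d) := by
      rw [← mul_assoc, ← C_mul, inv_mul_cancel₀ hc, C_1, one_mul]
    rw [e2]
    exact h2.mul_left _
  have hNdvd : p ∣ N ^ d := (dvd_add_right hMdvd).mp hpf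
  rw [hMd] at hMdvd
  rw [hNd] at hNdvd
  exact aux_relprime_mon (d • s) (d • t) (a ^ d) (b ^ d) (pow_ne_zero _ ha) (pow_ne_zero _ hb)
    (fun j => by rcases hdisj j with h | h <;> simp [h]) hMdvd hNdvd

/-- For monomials `g, h` with disjoint support over an algebraically closed field of
characteristic zero, at least one non-constant, `g^d + h^d` is squarefree
(no repeated irreducible factors). -/
theorem stmt1 {K : Type*} [Field K] [IsAlgClosed K] [CharZero K] {k : ℕ}
    (u v : Fin k → ℕ) (a b : K) (ha : a ≠ 0) (hb : b ≠ 0)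
    (hdisj : ∀ i, u i = 0 ∨ v i = 0) (hnc : u ≠ 0 ∨ v ≠ 0)
    (g h : MvPolynomial (Fin k) K)
    (hg : g = MvPolynomial.C a * ∏ i, MvPolynomial.X i ^ u i)
    (hh : h = MvPolynomial.C b * ∏ i, MvPolynomial.X i ^ v i)
    (d : ℕ) :
    Squarefree (g ^ d + h ^ d) := by
  set su : Fin k →₀ ℕ := Finsupp.equivFunOnFinite.symm u with hsu
  set sv : Fin k →₀ ℕ := Finsupp.equivFunOnFinite.symm v with hsv
  have hsuv : ∀ i, su i = u i := fun i => rfl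
  have hsvv : ∀ i, sv i = v i := fun i => rfl
  have hgm : g = monomial su a := by
    rw [hg, monomial_eq, Finsupp.prod_pow]
    simp only [hsuv]
  have hhm : h = monomial sv b := by
    rw [hh, monomial_eq, Finsupp.prod_pow]
    simp only [hsvv]
  rcases Nat.eq_zero_or_pos d with rfl | hd
  · simp only [pow_zero]
    have h2 : ((1 : MvPolynomial (Fin k) K) + 1) = C 2 := by
      rw [← C_1, ← C_add]
      norm_num
    rw [h2]
    exact ((isUnit_iff_ne_zero.mpr (two_ne_zero)).map (C : K →+* _)).squarefree
  · have hd' : d ≠ 0 := Nat.pos_iff_ne_zero.mp hd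
    rcases hnc with hu | hv
    · obtain ⟨i, hi⟩ := Function.ne_iff.mp hu
      rw [hgm, hhm]
      exact aux_key_sf su sv a b ha hb (fun i => hdisj i) i hi d hd'
    · obtain ⟨i, hi⟩ := Function.ne_iff.mp hv
      rw [hgm, hhm, add_comm]
      exact aux_key_sf sv su b a hb ha (fun i => (hdisj i).symm) i hi d hd'
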